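/- For every c with 1/2 ≤ c ≤ 1 and every ε > 0 there exists N such that for all n ≥ N, if λ = ⌊(log₂ n)^c⌋, then there exists a bipartite covering H of the complete multigraph K_n^λ with cap(H) ≤ n·( log₂(n−1) + (c+ε)·λ·log₂ log₂ n ). -/

import Mathlib

set_option maxHeartbeats 1000000


open Finset

lemma ball_card_le (k r : ℕ) (x : Fin k → Bool) :
    ({y : Fin k → Bool | hammingDist x y ≤ r} : Finset _).card
      ≤ ∑ i ∈ Finset.range (r+1), k.choose i := by
  classical
  have hinj : ∀ a b c : Bool, a ≠ b → a ≠ c → b = c := by decide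
  calc ({y : Fin k → Bool | hammingDist x y ≤ r} : Finset _).card
      ≤ ((Finset.range (r+1)).biUnion fun i =>
          Finset.powersetCard i (univ : Finset (Fin k))).card := by
        apply Finset.card_le_card_of_injOn
          (fun y => ({i | x i ≠ y i} : Finset (Fin k)))
        · intro y hy
          simp only [Finset.mem_coe, Finset.mem_filter, Finset.mem_univ, true_and, Finset.mem_biUnion] at *
          refine ⟨({i | x i ≠ y i} : Finset (Fin k)).card, ?_, ?_⟩
          · simp only [Finset.mem_range]
            exact Nat.lt_succ_of_le hy
          · simp [Finset.mem_powersetCard]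
        · intro y₁ h₁ y₂ h₂ hs
          simp only at hs
          funext j
          by_cases h : x j = y₁ j
          · have hj : j ∉ ({i | x i ≠ y₁ i} : Finset (Fin k)) := by simp [h]
            rw [hs] at hj
            simp only [Finset.mem_filter, Finset.mem_univ, true_and, not_not] at hj
            rw [← h, hj]
          · have hj : j ∈ ({i | x i ≠ y₁ i} : Finset (Fin k)) := by simp [h]
            rw [hs] at hj
            simp only [Finset.mem_filter, Finset.mem_univ, true_and] at hj
            exact hinj _ _ _ h hj
    _ ≤ ∑ i ∈ Finset.range (r+1), (Finset.powersetCard i (univ : Finset (Fin k))).card :=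
        Finset.card_biUnion_le
    _ = ∑ i ∈ Finset.range (r+1), k.choose i := by
        simp [Finset.card_powersetCard]

lemma exists_code (k r : ℕ) :
    ∀ n : ℕ, n * (∑ i ∈ Finset.range (r+1), k.choose i) ≤ 2^k →
    ∃ f : Fin n → (Fin k → Bool), ∀ x y, x ≠ y → r < hammingDist (f x) (f y) := by
  classical
  intro n
  induction n with
  | zero => exact fun _ => ⟨Fin.elim0, fun x => x.elim0⟩
  | succ n ih =>
    intro hn
    have hS : 1 ≤ ∑ i ∈ Finset.range (r+1), k.choose i := by
      calc 1 = k.choose 0 := (Nat.choose_zero_right k).symm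
      _ ≤ _ := Finset.single_le_sum (f := fun i => k.choose i) (by intros; positivity)
          (by simp)
    obtain ⟨f, hf⟩ := ih (le_trans (Nat.mul_le_mul_right _ (Nat.le_succ n)) hn)
    set Bad : Finset (Fin k → Bool) :=
      Finset.univ.biUnion
        (fun x => ({y : Fin k → Bool | hammingDist (f x) y ≤ r} : Finset _)) with hBad
    have hcard : Bad.card < 2 ^ k := by
      have h1 : Bad.card ≤ n * (∑ i ∈ Finset.range (r+1), k.choose i) := by
        calc Bad.card ≤ ∑ _x : Fin n, (∑ i ∈ Finset.range (r+1), k.choose i) :=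
            Finset.card_biUnion_le.trans
              (Finset.sum_le_sum fun x _ => ball_card_le k r (f x))
        _ = n * (∑ i ∈ Finset.range (r+1), k.choose i) := by
            simp [Finset.sum_const, mul_comm]
      have h2 : n * (∑ i ∈ Finset.range (r+1), k.choose i) < 2 ^ k := by
        have hlt : n * (∑ i ∈ Finset.range (r+1), k.choose i)
            < (n+1) * (∑ i ∈ Finset.range (r+1), k.choose i) := by nlinarith
        omega
      omega
    have hne : ∃ g : Fin k → Bool, g ∉ Bad := by
      by_contra h
      push_neg at h
      have : (Finset.univ : Finset (Fin k → Bool)) ⊆ Bad := fun g _ => h g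
      have := Finset.card_le_card this
      simp only [Finset.card_univ, Fintype.card_fun, Fintype.card_bool,
        Fintype.card_fin] at this
      omega
    obtain ⟨g, hg⟩ := hne
    have hgd : ∀ x : Fin n, r < hammingDist (f x) g := by
      intro x
      by_contra h
      push_neg at h
      exact hg (Finset.mem_biUnion.2 ⟨x, Finset.mem_univ x, by
        simp only [Finset.mem_filter, Finset.mem_univ, true_and]; exact h⟩)
    refine ⟨Fin.snoc f g, fun x y hxy => ?_⟩
    induction x using Fin.lastCases with
    | last =>
      induction y using Fin.lastCases with
      | last => exact absurd rfl hxy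
      | cast j =>
        simp only [Fin.snoc_last, Fin.snoc_castSucc]
        rw [hammingDist_comm]
        exact hgd j
    | cast i =>
      induction y using Fin.lastCases with
      | last =>
        simp only [Fin.snoc_last, Fin.snoc_castSucc]
        exact hgd i
      | cast j =>
        simp only [Fin.snoc_castSucc]
        exact hf i j (fun h => hxy (by rw [h]))

open Finset Real Nat

lemma fact_le_pow_mul (i d : ℕ) : (i + d)! ≤ i ! * (i + d) ^ d := by
  induction d with
  | zero => simp
  | succ d ih =>
    have h1 : (i + (d+1))! = (i + d + 1) * (i + d)! := by
      rw [show i + (d+1) = (i+d) + 1 by ring, Nat.factorial_succ]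
    rw [h1]
    calc (i + d + 1) * (i + d)! ≤ (i + d + 1) * (i ! * (i + d) ^ d) :=
          Nat.mul_le_mul_left _ ih
      _ ≤ (i + d + 1) * (i ! * (i + d + 1) ^ d) := by
          refine Nat.mul_le_mul_left _ (Nat.mul_le_mul_left _ (Nat.pow_le_pow_left ?_ _))
          omega
      _ = i ! * (i + (d+1)) ^ (d+1) := by ring_nf
  
lemma term_le (k i r : ℕ) (hir : i ≤ r) (hrk : r ≤ k) :
    (k:ℝ) ^ i / i ! ≤ (k:ℝ) ^ r / r ! := by
  rw [div_le_div_iff₀ (by positivity) (by positivity)]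
  have h1 : (r)! ≤ i ! * k ^ (r - i) := by
    calc (r)! = (i + (r - i))! := by congr 1; omega
      _ ≤ i ! * (i + (r-i)) ^ (r-i) := fact_le_pow_mul _ _
      _ ≤ i ! * k ^ (r-i) := by
          refine Nat.mul_le_mul_left _ (Nat.pow_le_pow_left (by omega) _)
  calc (k:ℝ) ^ i * r ! ≤ (k:ℝ) ^ i * (i ! * k ^ (r-i)) := by
        refine mul_le_mul_of_nonneg_left ?_ (by positivity)
        exact_mod_cast h1
    _ = (k:ℝ) ^ (i + (r-i)) * i ! := by push_cast; ring
    _ = (k:ℝ) ^ r * i ! := by congr 2; omega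

lemma sum_choose_le_real (k r : ℕ) (hrk : r ≤ k) :
    (∑ i ∈ Finset.range (r+1), (k.choose i : ℝ)) ≤ (r+1) * ((k:ℝ) ^ r / r !) := by
  calc (∑ i ∈ Finset.range (r+1), (k.choose i : ℝ))
      ≤ ∑ i ∈ Finset.range (r+1), (k:ℝ) ^ i / i ! := by
        refine Finset.sum_le_sum fun i _ => ?_
        exact_mod_cast Nat.choose_le_pow_div i k
    _ ≤ ∑ _i ∈ Finset.range (r+1), (k:ℝ) ^ r / r ! := by
        refine Finset.sum_le_sum fun i hi => ?_
        exact term_le k i r (by simpa [Nat.lt_succ_iff] using hi) hrk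
    _ = (r+1) * ((k:ℝ) ^ r / r !) := by simp [mul_comm]

lemma pow_div_factorial_le (r : ℕ) (hr : 1 ≤ r) (k : ℝ) (hk : 0 ≤ k) :
    k ^ r / r ! ≤ (Real.exp 1 * k / r) ^ r := by
  have hrpos : (0:ℝ) < r := by exact_mod_cast hr
  have h1 : (r:ℝ) ^ r / r ! ≤ Real.exp 1 ^ r := by
    calc (r:ℝ) ^ r / r ! ≤ ∑ i ∈ Finset.range (r+1), (r:ℝ) ^ i / i ! := by
          refine Finset.single_le_sum (f := fun i => (r:ℝ)^i / i !)
            (fun i _ => by positivity) (by simp)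
      _ ≤ Real.exp r := Real.sum_le_exp_of_nonneg (le_of_lt hrpos) _
      _ = Real.exp 1 ^ r := by
          rw [← Real.exp_nat_mul]; norm_num
  have hfac : (0:ℝ) < r ! := by positivity
  rw [div_pow, mul_pow, div_le_div_iff₀ hfac (by positivity)]
  calc k ^ r * (r:ℝ) ^ r ≤ k ^ r * (Real.exp 1 ^ r * r !) := by
        refine mul_le_mul_of_nonneg_left ?_ (by positivity)
        rw [div_le_iff₀ hfac] at h1
        linarith
    _ = Real.exp 1 ^ r * k ^ r * r ! := by ring

open Finset Real Filter

lemma eventually_good (c ε : ℝ) (hc₁ : 1/2 ≤ c) (hc₂ : c ≤ 1) (hε : 0 < ε) :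
    ∀ᶠ L : ℝ in Filter.atTop, ∀ lam k : ℕ,
      lam = ⌊L ^ c⌋₊ → k = ⌊L + (c + ε/2) * lam * Real.logb 2 L⌋₊ + 1 →
      2 ≤ lam ∧ lam ≤ k ∧
      4 ≤ (ε/2) * lam * Real.logb 2 L ∧
      (k:ℝ) ≤ L + (c + ε/2) * lam * Real.logb 2 L + 1 ∧
      Real.logb 2 lam + ((lam:ℝ) - 1) * Real.logb 2 (Real.exp 1 * k / ((lam:ℝ) - 1))
        ≤ (c + ε/2) * lam * Real.logb 2 L := by
  obtain ⟨e1, he1⟩ : ∃ x : ℝ, x = Real.exp 1 := ⟨_, rfl⟩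
  have h2e : (2:ℝ) ≤ e1 := by rw [he1]; have := Real.add_one_le_exp 1; linarith
  obtain ⟨C₁, hC₁⟩ : ∃ x : ℝ, x = c + ε/2 + 1 := ⟨_, rfl⟩
  have hC₁pos : (1:ℝ) ≤ C₁ := by rw [hC₁]; linarith
  obtain ⟨D, hD⟩ : ∃ x : ℝ, x = Real.logb 2 (4 * e1 * C₁) := ⟨_, rfl⟩
  have hD0 : 0 ≤ D := by
    have h1 : (2:ℝ)*1 ≤ e1*C₁ := mul_le_mul h2e hC₁pos zero_le_one (by linarith)
    rw [hD]
    exact Real.logb_nonneg one_lt_two (by nlinarith)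
  have EA : ∀ᶠ L : ℝ in atTop, (1:ℝ) ≤ L := eventually_ge_atTop 1
  have EB : ∀ᶠ L : ℝ in atTop, (4:ℝ) ≤ Real.logb 2 L :=
    (Real.tendsto_logb_atTop one_lt_two).eventually_ge_atTop 4
  have EC : ∀ᶠ L : ℝ in atTop, max 4 (16/ε) ≤ L ^ ((1:ℝ)/2) :=
    (tendsto_rpow_atTop (by norm_num)).eventually_ge_atTop _
  have ED : ∀ᶠ L : ℝ in atTop, 2 * Real.logb 2 L ≤ L ^ ((1:ℝ)/2) := by
    have hlog2 : (0:ℝ) < Real.log 2 / 2 := by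
      have := Real.log_pos one_lt_two; linarith
    filter_upwards [(isLittleO_log_rpow_atTop (by norm_num : (0:ℝ) < 1/2)).def hlog2,
      eventually_ge_atTop (1:ℝ)] with L hL hL1
    have hLpos : (0:ℝ) < L := by linarith
    have h1 : ‖Real.log L‖ = Real.log L := by
      rw [Real.norm_eq_abs, abs_of_nonneg (Real.log_nonneg hL1)]
    have h2 : ‖L ^ ((1:ℝ)/2)‖ = L ^ ((1:ℝ)/2) := by
      rw [Real.norm_eq_abs, abs_of_nonneg (Real.rpow_nonneg (le_of_lt hLpos) _)]
    rw [h1, h2] at hL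
    have hlog2' : (0:ℝ) < Real.log 2 := Real.log_pos one_lt_two
    rw [Real.logb]
    have h0 : (0:ℝ) ≤ (Real.log 2)⁻¹ := by positivity
    have key : 2 * (Real.log L / Real.log 2)
        ≤ 2 * (Real.log 2 / 2 * L ^ ((1:ℝ)/2) / Real.log 2) := by gcongr
    have heq : 2 * (Real.log 2 / 2 * L ^ ((1:ℝ)/2) / Real.log 2) = L ^ ((1:ℝ)/2) := by
      field_simp
    linarith
  have EE : ∀ᶠ L : ℝ in atTop,
      1 + D + Real.logb 2 (Real.logb 2 L) ≤ (ε/2) * Real.logb 2 L := by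
    have Et : ∀ᶠ t : ℝ in atTop, 1 + D + Real.logb 2 t ≤ (ε/2) * t := by
      have h1 : ∀ᶠ t : ℝ in atTop, 1 + D ≤ (ε/4) * t := by
        filter_upwards [eventually_ge_atTop ((1+D)*(4/ε))] with t ht
        have h4 : (0:ℝ) ≤ ε/4 := by linarith
        have := mul_le_mul_of_nonneg_left ht h4
        calc 1 + D = ε/4 * ((1+D)*(4/ε)) := by field_simp
          _ ≤ ε/4 * t := this
      have h2 : ∀ᶠ t : ℝ in atTop, Real.logb 2 t ≤ (ε/4) * t := by
        have hlog2 : (0:ℝ) < ε/4 * Real.log 2 := by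
          have := Real.log_pos one_lt_two; nlinarith
        filter_upwards [Real.isLittleO_log_id_atTop.def hlog2,
          eventually_ge_atTop (1:ℝ)] with t ht ht1
        have h1' : ‖Real.log t‖ = Real.log t := by
          rw [Real.norm_eq_abs, abs_of_nonneg (Real.log_nonneg ht1)]
        have h2' : ‖id t‖ = t := by
          show ‖t‖ = t
          rw [Real.norm_eq_abs, abs_of_nonneg (by linarith)]
        rw [h1', h2'] at ht
        have hlog2' : (0:ℝ) < Real.log 2 := Real.log_pos one_lt_two
        rw [Real.logb, div_le_iff₀ hlog2']
        calc Real.log t ≤ ε/4 * Real.log 2 * t := ht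
          _ = ε/4 * t * Real.log 2 := by ring
      filter_upwards [h1, h2] with t h1 h2
      linarith
    exact (Real.tendsto_logb_atTop one_lt_two).eventually Et
  filter_upwards [EA, EB, EC, ED, EE] with L hL1 hT hC hSqrt hE
  intro lam k hlam hk
  obtain ⟨t, htdef⟩ : ∃ x : ℝ, x = Real.logb 2 L := ⟨_, rfl⟩
  rw [← htdef] at hT hSqrt hE hk ⊢
  have hLpos : (0:ℝ) < L := by linarith
  have ht0 : (0:ℝ) ≤ t := by linarith
  have hLc_pos : (0:ℝ) < L ^ c := Real.rpow_pos_of_pos hLpos c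
  have hhalf : L ^ ((1:ℝ)/2) ≤ L ^ c := Real.rpow_le_rpow_of_exponent_le hL1 hc₁
  have hLc4 : (4:ℝ) ≤ L ^ c := le_trans (le_trans (le_max_left _ _) hC) hhalf
  have hLc16 : 16/ε ≤ L ^ c := le_trans (le_trans (le_max_right _ _) hC) hhalf
  have hLcL : L ^ c ≤ L := by
    have := Real.rpow_le_rpow_of_exponent_le hL1 hc₂
    rwa [Real.rpow_one] at this
  have hlam_lt : L ^ c - 1 < (lam:ℝ) := by rw [hlam]; exact Nat.sub_one_lt_floor _
  have hlam_le : (lam:ℝ) ≤ L ^ c := by rw [hlam]; exact Nat.floor_le (le_of_lt hLc_pos)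
  have hlam_half : L ^ c / 2 ≤ (lam:ℝ) := by linarith
  have hlam2 : 2 ≤ lam := by exact_mod_cast (by linarith : (2:ℝ) ≤ (lam:ℝ))
  have hlam2R : (2:ℝ) ≤ (lam:ℝ) := by exact_mod_cast hlam2
  have htlam : t ≤ (lam:ℝ) := by
    have : 2 * t ≤ L ^ c := le_trans hSqrt hhalf
    linarith
  have hKpos : (0:ℝ) < c + ε/2 := by linarith
  obtain ⟨z, hz⟩ : ∃ x : ℝ, x = L + (c + ε/2) * lam * t := ⟨_, rfl⟩
  rw [← hz] at hk
  have hz0 : (0:ℝ) ≤ z := by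
    have : (0:ℝ) ≤ (c + ε/2) * lam * t := by positivity
    rw [hz]; linarith
  have hkz : z < (k:ℝ) := by
    rw [hk]; push_cast; exact Nat.lt_floor_add_one z
  have hk_le : (k:ℝ) ≤ z + 1 := by
    rw [hk]; push_cast
    have := Nat.floor_le hz0
    linarith
  have hlamk : lam ≤ k := by
    have h1 : (lam:ℝ) < (k:ℝ) := by
      have h2 : (0:ℝ) ≤ (c + ε/2) * lam * t := by positivity
      have : (lam:ℝ) ≤ L := le_trans hlam_le hLcL
      rw [hz] at hkz; linarith
    exact le_of_lt (by exact_mod_cast h1)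
  have hepslamt : 4 ≤ ε/2 * lam * t := by
    have hl8 : 8/ε ≤ (lam:ℝ) := by
      have h16 : (16:ℝ)/ε = 2*(8/ε) := by ring
      linarith
    have h8 : (8:ℝ) ≤ ε * lam := by
      have := mul_le_mul_of_nonneg_left hl8 (le_of_lt hε)
      calc (8:ℝ) = ε * (8/ε) := by field_simp
        _ ≤ ε * lam := this
    have h4 : (4:ℝ) ≤ ε/2 * lam := by
      have : ε/2 * (lam:ℝ) = (ε*lam)/2 := by ring
      linarith
    calc (4:ℝ) ≤ 4 * 4 / 4 := by norm_num
      _ ≤ ε/2 * lam * t := by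
          have := mul_le_mul h4 hT (by norm_num) (by linarith)
          linarith
  have hkC : (k:ℝ) ≤ C₁ * L * t := by
    have hlamL : (lam:ℝ) ≤ L := le_trans hlam_le hLcL
    have h1 : (c + ε/2) * lam * t ≤ (c + ε/2) * L * t := by
      refine mul_le_mul_of_nonneg_right ?_ ht0
      exact mul_le_mul_of_nonneg_left hlamL (le_of_lt hKpos)
    have h2 : L + 1 ≤ L * t := by
      have h3 : L * 4 ≤ L * t := mul_le_mul_of_nonneg_left hT (by linarith)
      linarith
    have h4 : C₁ * L * t = (c + ε/2) * L * t + L * t := by rw [hC₁]; ring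
    have h5 : (k:ℝ) ≤ z + 1 := hk_le
    rw [hz] at h5
    linarith
  -- bound on the log term
  have hrpos : (0:ℝ) < (lam:ℝ) - 1 := by linarith
  have hrLc : L ^ c / 4 ≤ (lam:ℝ) - 1 := by linarith
  have hkpos : (0:ℝ) < (k:ℝ) := by
    have : 1 ≤ k := le_trans (by omega) hlamk
    exact_mod_cast this
  have he1pos : (0:ℝ) < e1 := by linarith
  have htpos : (0:ℝ) < t := by linarith
  have hqpos : (0:ℝ) < e1 * k / ((lam:ℝ) - 1) := by positivity
  have hWq : e1 * k / ((lam:ℝ) - 1) ≤ 4 * e1 * C₁ * (L ^ ((1:ℝ) - c) * t) := by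
    have hnum : e1 * k ≤ e1 * (C₁ * L * t) :=
      mul_le_mul_of_nonneg_left hkC (le_of_lt he1pos)
    have hstep : e1 * k / ((lam:ℝ) - 1) ≤ e1 * (C₁ * L * t) / (L ^ c / 4) :=
      div_le_div₀ (by positivity) hnum (by positivity) hrLc
    have hrs : L ^ ((1:ℝ) - c) = L / L ^ c := by
      rw [Real.rpow_sub hLpos, Real.rpow_one]
    have heq : e1 * (C₁ * L * t) / (L ^ c / 4) = 4 * e1 * C₁ * (L / L ^ c * t) := by
      field_simp
    rw [hrs]
    calc e1 * k / ((lam:ℝ) - 1) ≤ e1 * (C₁ * L * t) / (L ^ c / 4) := hstep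
      _ = 4 * e1 * C₁ * (L / L ^ c * t) := heq
  have he1pos' : (0:ℝ) < e1 := by linarith
  have hW : Real.logb 2 (4 * e1 * C₁ * (L ^ ((1:ℝ) - c) * t))
      = D + ((1 - c) * t + Real.logb 2 t) := by
    have hC₁pos' : (0:ℝ) < C₁ := by linarith
    have ha : Real.logb 2 (L ^ ((1:ℝ) - c) * t) =
        Real.logb 2 (L ^ ((1:ℝ) - c)) + Real.logb 2 t :=
      Real.logb_mul (by positivity) (by positivity)
    have hb : Real.logb 2 (4 * e1 * C₁ * (L ^ ((1:ℝ) - c) * t)) =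
        Real.logb 2 (4 * e1 * C₁) + Real.logb 2 (L ^ ((1:ℝ) - c) * t) :=
      Real.logb_mul (by positivity) (by positivity)
    rw [hb, ha, Real.logb_rpow_eq_mul_logb_of_pos hLpos, ← htdef, ← hD]
  have hlog_le : Real.logb 2 (e1 * k / ((lam:ℝ) - 1)) ≤ D + (1 - c) * t + Real.logb 2 t := by
    have := Real.logb_le_logb_of_le one_lt_two hqpos hWq
    rw [hW] at this; linarith
  have hB0 : (0:ℝ) ≤ D + (1 - c) * t + Real.logb 2 t := by
    have h1 : (0:ℝ) ≤ (1-c)*t := by nlinarith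
    have h2 : (0:ℝ) ≤ Real.logb 2 t := Real.logb_nonneg one_lt_two (by linarith)
    linarith
  have hloglam : Real.logb 2 lam ≤ t := by
    have h1 : (0:ℝ) < (lam:ℝ) := by linarith
    rw [htdef]
    exact Real.logb_le_logb_of_le one_lt_two h1 (le_trans hlam_le hLcL)
  have hfinal : Real.logb 2 lam + ((lam:ℝ) - 1) * Real.logb 2 (e1 * k / ((lam:ℝ) - 1))
      ≤ (c + ε/2) * lam * t := by
    have s1 : ((lam:ℝ) - 1) * Real.logb 2 (e1 * k / ((lam:ℝ) - 1))
        ≤ ((lam:ℝ) - 1) * (D + (1 - c) * t + Real.logb 2 t) :=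
      mul_le_mul_of_nonneg_left hlog_le (by linarith)
    have s2 : ((lam:ℝ) - 1) * (D + (1 - c) * t + Real.logb 2 t)
        ≤ (lam:ℝ) * (D + (1 - c) * t + Real.logb 2 t) :=
      mul_le_mul_of_nonneg_right (by linarith) hB0
    have s3 : D + (1 - c) * t + Real.logb 2 t + 1 ≤ (c + ε/2) * t := by
      have hct : (1 - c) * t ≤ c * t := by
        have : (0:ℝ) ≤ (2*c - 1) * t := mul_nonneg (by linarith) ht0
        linarith
      have hexp : (c + ε/2) * t = c * t + ε/2 * t := by ring
      linarith
    have s4 : (lam:ℝ) * (D + (1 - c) * t + Real.logb 2 t) + (lam:ℝ)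
        ≤ (c + ε/2) * lam * t := by
      have hm := mul_le_mul_of_nonneg_left s3 (by linarith : (0:ℝ) ≤ (lam:ℝ))
      have e1' : (lam:ℝ) * (D + (1 - c) * t + Real.logb 2 t + 1)
          = (lam:ℝ) * (D + (1 - c) * t + Real.logb 2 t) + (lam:ℝ) := by ring
      have e2' : (lam:ℝ) * ((c + ε/2) * t) = (c + ε/2) * lam * t := by ring
      linarith
    linarith
  rw [← he1] at *
  refine ⟨hlam2, hlamk, hepslamt, ?_, hfinal⟩
  rw [hz] at hk_le
  exact hk_le



/- STATEMENT 5 (improved upper bound for `λ = ⌊(log₂ n)^c⌋`, `1/2 ≤ c ≤ 1`).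
A bipartite covering of the complete multigraph `K_n^λ` is a finite family of bipartite
graphs given by pairs of disjoint bipartition classes `(A i, B i)` such that every pair
of distinct vertices is separated by at least `λ` of the pairs.  The capacity is
`∑ i, |A i ∪ B i|`. -/
theorem multigraph_cover_upper_bound_midrange (c : ℝ) (hc₁ : 1 / 2 ≤ c) (hc₂ : c ≤ 1)
    (ε : ℝ) (hε : 0 < ε) :
    ∃ N : ℕ, ∀ n : ℕ, N ≤ n → ∀ lam : ℕ, lam = ⌊(Real.logb 2 n) ^ c⌋₊ →
      ∃ (m : ℕ) (A B : Fin m → Finset (Fin n)),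
        (∀ i, Disjoint (A i) (B i)) ∧
        (∀ x y : Fin n, x ≠ y →
          lam ≤ (Finset.univ.filter
            (fun i => (x ∈ A i ∧ y ∈ B i) ∨ (x ∈ B i ∧ y ∈ A i))).card) ∧
        (∑ i, ((A i ∪ B i).card : ℝ)) ≤
          (n : ℝ) * (Real.logb 2 ((n : ℝ) - 1)
            + (c + ε) * (lam : ℝ) * Real.logb 2 (Real.logb 2 n)) := by
  classical
  have htendsto : Filter.Tendsto (fun n : ℕ => Real.logb 2 (n : ℝ))
      Filter.atTop Filter.atTop :=
    (Real.tendsto_logb_atTop one_lt_two).comp tendsto_natCast_atTop_atTop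
  have hevn := (htendsto.eventually (eventually_good c ε hc₁ hc₂ hε)).and
    (Filter.eventually_ge_atTop 2)
  obtain ⟨N, hN⟩ := Filter.eventually_atTop.mp hevn
  refine ⟨N, fun n hn lam hlam => ?_⟩
  obtain ⟨hgood, hn2⟩ := hN n hn
  -- notation
  set L : ℝ := Real.logb 2 (n : ℝ) with hL
  set t : ℝ := Real.logb 2 L with ht
  set k : ℕ := ⌊L + (c + ε/2) * lam * t⌋₊ + 1 with hkdef
  obtain ⟨hlam2, hlamk, heps, hkle, hexp⟩ := hgood lam k hlam rfl
  have hnpos : (0:ℝ) < n := by positivity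
  have hn2R : (2:ℝ) ≤ n := by exact_mod_cast hn2
  have hlam2R : (2:ℝ) ≤ (lam:ℝ) := by exact_mod_cast hlam2
  set r : ℕ := lam - 1 with hrdef
  have hr1 : 1 ≤ r := by omega
  have hrlam : r + 1 = lam := by omega
  have hrk : r ≤ k := by omega
  have hrR : ((r:ℕ):ℝ) = (lam:ℝ) - 1 := by
    rw [hrdef]; push_cast [Nat.cast_sub (by omega : 1 ≤ lam)]; ring
  have hrpos : (0:ℝ) < (lam:ℝ) - 1 := by linarith
  have hkpos : (0:ℝ) < (k:ℝ) := by
    have : 1 ≤ k := by omega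
    exact_mod_cast this
  set q : ℝ := Real.exp 1 * k / ((lam:ℝ) - 1) with hq
  have hqpos : (0:ℝ) < q := by
    have := Real.exp_pos 1
    rw [hq]; positivity
  -- the exponent inequality
  have hzk : L + (c + ε/2) * lam * t < (k:ℝ) := by
    rw [hkdef]; push_cast; exact Nat.lt_floor_add_one _
  have hEk : L + (Real.logb 2 (lam:ℝ) + ((lam:ℝ) - 1) * Real.logb 2 q) ≤ (k:ℝ) := by
    have h1 : Real.logb 2 (lam:ℝ) + ((lam:ℝ) - 1) * Real.logb 2 q
        ≤ (c + ε/2) * lam * t := hexp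
    linarith
  -- code existence
  have hcode : n * (∑ i ∈ Finset.range (r+1), k.choose i) ≤ 2^k := by
    have hR : (n:ℝ) * (∑ i ∈ Finset.range (r+1), (k.choose i : ℝ)) ≤ (2:ℝ)^k := by
      have c1 : (∑ i ∈ Finset.range (r+1), (k.choose i : ℝ))
          ≤ ((r:ℝ)+1) * ((k:ℝ) ^ r / r !) := sum_choose_le_real k r hrk
      have c2 : (k:ℝ) ^ r / r ! ≤ q ^ r := by
        have := pow_div_factorial_le r hr1 (k:ℝ) (le_of_lt hkpos)
        rwa [hq, ← hrR]
      have c3 : ((r:ℝ)+1) * ((k:ℝ) ^ r / r !) ≤ (lam:ℝ) * q ^ r := by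
        have hre : (r:ℝ) + 1 = (lam:ℝ) := by rw [hrR]; ring
        rw [hre]
        exact mul_le_mul_of_nonneg_left c2 (by linarith)
      have c4 : (n:ℝ) * ((lam:ℝ) * q ^ r) ≤ (2:ℝ)^k := by
        have e1 : (n:ℝ) = (2:ℝ) ^ L :=
          (Real.rpow_logb two_pos (by norm_num) hnpos).symm
        have e2 : (lam:ℝ) = (2:ℝ) ^ Real.logb 2 (lam:ℝ) :=
          (Real.rpow_logb two_pos (by norm_num) (by linarith)).symm
        have e3 : q ^ r = (2:ℝ) ^ (((lam:ℝ) - 1) * Real.logb 2 q) := by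
          have hql : q = (2:ℝ) ^ Real.logb 2 q :=
            (Real.rpow_logb two_pos (by norm_num) hqpos).symm
          calc q ^ r = ((2:ℝ) ^ Real.logb 2 q) ^ (r:ℝ) := by
                rw [← hql, Real.rpow_natCast]
            _ = (2:ℝ) ^ (Real.logb 2 q * (r:ℝ)) := by
                rw [← Real.rpow_mul (by norm_num)]
            _ = (2:ℝ) ^ (((lam:ℝ) - 1) * Real.logb 2 q) := by
                rw [hrR]; ring_nf
        calc (n:ℝ) * ((lam:ℝ) * q ^ r)
            = (2:ℝ) ^ (L + (Real.logb 2 (lam:ℝ) + ((lam:ℝ) - 1) * Real.logb 2 q)) := by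
              rw [Real.rpow_add two_pos, Real.rpow_add two_pos, ← e1, ← e2, ← e3]
          _ ≤ (2:ℝ) ^ ((k:ℝ)) := by
              exact Real.rpow_le_rpow_of_exponent_le (by norm_num) hEk
          _ = (2:ℝ) ^ k := by rw [Real.rpow_natCast]
      have hsum0 : (0:ℝ) ≤ ∑ i ∈ Finset.range (r+1), (k.choose i : ℝ) := by positivity
      calc (n:ℝ) * (∑ i ∈ Finset.range (r+1), (k.choose i : ℝ))
          ≤ (n:ℝ) * (((r:ℝ)+1) * ((k:ℝ) ^ r / r !)) :=
            mul_le_mul_of_nonneg_left c1 (le_of_lt hnpos)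
        _ ≤ (n:ℝ) * ((lam:ℝ) * q ^ r) :=
            mul_le_mul_of_nonneg_left c3 (le_of_lt hnpos)
        _ ≤ (2:ℝ)^k := c4
    have := hR
    push_cast at this
    exact_mod_cast this
  obtain ⟨f, hf⟩ := exists_code k r n hcode
  -- build the bipartite covering
  refine ⟨k, fun i => Finset.univ.filter (fun v => f v i = false),
    fun i => Finset.univ.filter (fun v => f v i = true), ?_, ?_, ?_⟩
  · intro i
    rw [Finset.disjoint_left]
    intro v hv hv'
    simp only [Finset.mem_filter, Finset.mem_univ, true_and] at hv hv'
    rw [hv] at hv'; exact Bool.false_ne_true hv'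
  · intro x y hxy
    have hd : lam ≤ hammingDist (f x) (f y) := by
      have := hf x y hxy
      omega
    have hdeq : hammingDist (f x) (f y)
        = (Finset.univ.filter (fun i => f x i ≠ f y i)).card := rfl
    refine le_trans hd ?_
    rw [hdeq]
    apply Finset.card_le_card
    intro i hi
    simp only [Finset.mem_filter, Finset.mem_univ, true_and] at hi ⊢
    cases hxa : f x i <;> cases hya : f y i <;> simp_all
  · -- capacity
    have hcap1 : ∀ i : Fin k,
        (((Finset.univ.filter (fun v => f v i = false)
          ∪ Finset.univ.filter (fun v => f v i = true)).card : ℕ) : ℝ) ≤ n := by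
      intro i
      have := Finset.card_le_univ (Finset.univ.filter (fun v => f v i = false)
        ∪ Finset.univ.filter (fun v => f v i = true))
      simp only [Finset.card_univ, Fintype.card_fin] at this
      exact_mod_cast this
    have hF1 : (k:ℝ) ≤ Real.logb 2 ((n:ℝ) - 1) + (c + ε) * lam * t := by
      have hlog : L - 1 ≤ Real.logb 2 ((n:ℝ) - 1) := by
        have h1 : (n:ℝ)/2 ≤ (n:ℝ) - 1 := by linarith
        have h2 : (0:ℝ) < (n:ℝ)/2 := by linarith
        have h3 : Real.logb 2 ((n:ℝ)/2) ≤ Real.logb 2 ((n:ℝ) - 1) :=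
          Real.logb_le_logb_of_le one_lt_two h2 h1
        have h4 : Real.logb 2 ((n:ℝ)/2) = L - 1 := by
          rw [Real.logb_div (by linarith) (by norm_num),
            Real.logb_self_eq_one one_lt_two]
        linarith
      have hsplit : (c + ε) * (lam:ℝ) * t = (c + ε/2) * lam * t + (ε/2) * lam * t := by
        ring
      linarith
    calc (∑ i : Fin k, (((Finset.univ.filter (fun v => f v i = false)
          ∪ Finset.univ.filter (fun v => f v i = true)).card : ℕ) : ℝ))
        ≤ ∑ _i : Fin k, (n:ℝ) := Finset.sum_le_sum (fun i _ => hcap1 i)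
      _ = (k:ℝ) * n := by simp [mul_comm]
      _ = (n:ℝ) * k := by ring
      _ ≤ (n:ℝ) * (Real.logb 2 ((n:ℝ) - 1) + (c + ε) * lam * t) :=
          mul_le_mul_of_nonneg_left hF1 (le_of_lt hnpos)
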